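/- arXiv:0805.3277 — 7 statements merged into one kernel-verified Lean document; each statement's English description precedes it below -/
import Mathlib

section
/- For any simple graph G and integers r, s with 1 ≤ r and 1 ≤ s, the partial list coloring numbers satisfy λ_r(G) + λ_s(G) ≥ λ_{r+s}(G). -/
open SimpleGraph

/-- `c` properly colors each vertex of `S` from its list `L`. -/
def IsPartialListColoring {V : Type*} (G : SimpleGraph V) (L : V → Finset ℕ)
    (S : Set V) (c : V → ℕ) : Prop :=
  (∀ v ∈ S, c v ∈ L v) ∧ ∀ u ∈ S, ∀ v ∈ S, G.Adj u v → c u ≠ c v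

/-- `λ_L(G)`: the maximum number of vertices properly colorable from the lists of `L`. -/
noncomputable def lamL {V : Type*} (G : SimpleGraph V) (L : V → Finset ℕ) : ℕ :=
  sSup {k | ∃ (S : Finset V) (c : V → ℕ), S.card = k ∧ IsPartialListColoring G L S c}

/-- `λ_t(G)`: the minimum of `λ_L(G)` over all `t`-list assignments `L`. -/
noncomputable def lam {V : Type*} (G : SimpleGraph V) (t : ℕ) : ℕ :=
  sInf {m | ∃ L : V → Finset ℕ, (∀ v, (L v).card = t) ∧ lamL G L = m}

/-- `G` admits a full proper coloring from the lists of `L`. -/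
def ListColorable {V : Type*} (G : SimpleGraph V) (L : V → Finset ℕ) : Prop :=
  ∃ c : V → ℕ, (∀ v, c v ∈ L v) ∧ ∀ u v, G.Adj u v → c u ≠ c v

/-- The list chromatic number of `G`. -/
noncomputable def listChromaticNumber {V : Type*} (G : SimpleGraph V) : ℕ :=
  sInf {k | ∀ L : V → Finset ℕ, (∀ v, (L v).card = k) → ListColorable G L}

lemma lamL_bdd {V : Type*} [Fintype V] (G : SimpleGraph V) (L : V → Finset ℕ) :
    BddAbove {k | ∃ (S : Finset V) (c : V → ℕ), S.card = k ∧ IsPartialListColoring G L S c} := by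
  refine ⟨Fintype.card V, ?_⟩
  rintro k ⟨S, c, rfl, -⟩
  exact Finset.card_le_univ S

lemma card_le_lamL {V : Type*} [Fintype V] (G : SimpleGraph V) (L : V → Finset ℕ)
    (S : Finset V) (c : V → ℕ) (h : IsPartialListColoring G L S c) : S.card ≤ lamL G L :=
  le_csSup (lamL_bdd G L) ⟨S, c, rfl, h⟩

lemma lamL_le {V : Type*} (G : SimpleGraph V) (L : V → Finset ℕ) (m : ℕ)
    (h : ∀ (S : Finset V) (c : V → ℕ), IsPartialListColoring G L S c → S.card ≤ m) :
    lamL G L ≤ m := by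
  refine csSup_le ⟨0, ∅, fun _ => 0, Finset.card_empty, ⟨by simp, by simp⟩⟩ ?_
  rintro k ⟨S, c, rfl, hc⟩
  exact h S c hc

theorem lam_triangle_inequality {V : Type*} [Fintype V] (G : SimpleGraph V)
    (r s : ℕ) (hr : 1 ≤ r) (hs : 1 ≤ s) :
    lam G (r + s) ≤ lam G r + lam G s := by
  have hne : ∀ t : ℕ, {m | ∃ L : V → Finset ℕ, (∀ v, (L v).card = t) ∧ lamL G L = m}.Nonempty :=
    fun t => ⟨lamL G (fun _ => Finset.range t), fun _ => Finset.range t,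
      fun v => Finset.card_range t, rfl⟩
  obtain ⟨L1, hL1card, hL1x⟩ := Nat.sInf_mem (hne r)
  obtain ⟨L2, hL2card, hL2x⟩ := Nat.sInf_mem (hne s)
  have hL1 : lamL G L1 = lam G r := hL1x
  have hL2 : lamL G L2 = lam G s := hL2x
  set N : ℕ := (Finset.univ.sup fun v => (L1 v).sup id) + 1 with hN
  have hlt : ∀ v, ∀ x ∈ L1 v, x < N := by
    intro v x hx
    exact Nat.lt_succ_of_le (le_trans (Finset.le_sup (f := id) hx)
      (Finset.le_sup (f := fun v => (L1 v).sup id) (Finset.mem_univ v)))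
  set L2' : V → Finset ℕ := fun v => (L2 v).image (· + N) with hL2'
  have hdisj : ∀ v, Disjoint (L1 v) (L2' v) := by
    intro v
    rw [Finset.disjoint_left]
    intro x hx1 hx2
    obtain ⟨y, -, rfl⟩ := Finset.mem_image.mp hx2
    exact absurd (hlt v _ hx1) (Nat.not_lt.mpr (Nat.le_add_left N y))
  set L : V → Finset ℕ := fun v => L1 v ∪ L2' v with hLdef
  have hLcard : ∀ v, (L v).card = r + s := by
    intro v
    rw [hLdef]
    simp only
    rw [Finset.card_union_of_disjoint (hdisj v), hL1card,
      Finset.card_image_of_injective _ (add_left_injective N), hL2card]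
  refine le_trans (Nat.sInf_le ⟨L, hLcard, rfl⟩) ?_
  refine lamL_le G L (lam G r + lam G s) ?_
  intro S c hc
  classical
  clear_value L L2' N
  set S1 : Finset V := S.filter (fun v => c v ∈ L1 v) with hS1
  set S2 : Finset V := S.filter (fun v => c v ∉ L1 v) with hS2
  have hcard : S1.card + S2.card = S.card := Finset.card_filter_add_card_filter_not _
  have h1 : S1.card ≤ lam G r := by
    rw [← hL1]
    refine card_le_lamL G L1 S1 c ⟨?_, ?_⟩
    · intro v hv
      exact (Finset.mem_filter.mp hv).2
    · intro u hu v hv hadj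
      exact hc.2 u (Finset.mem_filter.mp hu).1 v (Finset.mem_filter.mp hv).1 hadj
  have h2 : S2.card ≤ lam G s := by
    rw [← hL2]
    have hmem : ∀ v ∈ S2, ∃ y ∈ L2 v, y + N = c v := by
      intro v hv
      obtain ⟨hvS, hvn⟩ := Finset.mem_filter.mp hv
      have := hc.1 v hvS
      rw [hLdef] at this
      simp only [Finset.mem_union] at this
      rcases this with h | h
      · exact absurd h hvn
      · rw [hL2'] at h
        simp only [Finset.mem_image] at h
        obtain ⟨y, hy, hyc⟩ := h
        exact ⟨y, hy, hyc⟩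
    refine card_le_lamL G L2 S2 (fun v => c v - N) ⟨?_, ?_⟩
    · intro v hv
      obtain ⟨y, hy, hyc⟩ := hmem v hv
      show c v - N ∈ L2 v
      have : c v - N = y := by rw [← hyc, Nat.add_sub_cancel]
      rwa [this]
    · intro u hu v hv hadj heq
      have heq2 : c u - N = c v - N := heq
      obtain ⟨y, -, hyc⟩ := hmem u hu
      obtain ⟨z, -, hzc⟩ := hmem v hv
      have huS := (Finset.mem_filter.mp hu).1
      have hvS := (Finset.mem_filter.mp hv).1
      have e1 : c u - N + N = c u := by rw [← hyc, Nat.add_sub_cancel]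
      have e2 : c v - N + N = c v := by rw [← hzc, Nat.add_sub_cancel]
      exact hc.2 u huS v hvS hadj (by rw [← e1, ← e2, heq2])
  rw [← hcard]
  exact Nat.add_le_add h1 h2
end

section
/- If G is a simple graph with n vertices and list chromatic number χ_ℓ, and t is a positive integer dividing χ_ℓ, then χ_ℓ · λ_t(G) ≥ t · n. -/
open SimpleGraph

lemma listColorable_of_card_card {V : Type*} [Fintype V] (G : SimpleGraph V)
    (L : V → Finset ℕ) (h : ∀ v, (L v).card = Fintype.card V) :
    ListColorable G L := by
  have hhall : ∀ s : Finset V, s.card ≤ (s.biUnion L).card := by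
    intro s
    rcases s.eq_empty_or_nonempty with rfl | ⟨v, hv⟩
    · simp
    · calc s.card ≤ Fintype.card V := Finset.card_le_univ s
        _ = (L v).card := (h v).symm
        _ ≤ (s.biUnion L).card :=
          Finset.card_le_card (fun x hx => Finset.mem_biUnion.mpr ⟨v, hv, hx⟩)
  obtain ⟨c, hinj, hmem⟩ := (Finset.all_card_le_biUnion_card_iff_exists_injective L).mp hhall
  exact ⟨c, hmem, fun u v hadj he => G.ne_of_adj hadj (hinj he)⟩

theorem agh_conjecture_of_dvd {V : Type*} [Fintype V] (G : SimpleGraph V)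
    (χ t : ℕ) (hχ : listChromaticNumber G = χ) (ht : 0 < t) (hdvd : t ∣ χ) :
    t * Fintype.card V ≤ χ * lam G t := by
  classical
  set n := Fintype.card V with hn
  set A : Set ℕ := {k | ∀ L : V → Finset ℕ, (∀ v, (L v).card = k) → ListColorable G L} with hA
  have hAn : n ∈ A := fun L hL => listColorable_of_card_card G L hL
  -- A is upward closed
  have hup : ∀ k ∈ A, ∀ m, k ≤ m → m ∈ A := by
    intro k hk m hkm L hL
    have hsub : ∀ v : V, ∃ L0 : Finset ℕ, L0 ⊆ L v ∧ L0.card = k := by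
      intro v
      exact Finset.exists_subset_card_eq (s := L v) (n := k) (by rw [hL v]; exact hkm)
    choose L0 hL0sub hL0card using hsub
    obtain ⟨c, hcmem, hcadj⟩ := hk L0 hL0card
    exact ⟨c, fun v => hL0sub v (hcmem v), hcadj⟩
  -- χ ∈ A
  have hχmem : χ ∈ A := by
    have : sInf A ∈ A := Nat.sInf_mem ⟨n, hAn⟩
    have hχ' : sInf A = χ := hχ
    rwa [hχ'] at this
  rcases Nat.eq_zero_or_pos n with hn0 | hnpos
  · rw [hn0]
    simp
  -- n > 0 forces χ > 0
  have hχpos : 0 < χ := by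
    rcases Nat.eq_zero_or_pos χ with h0 | h
    · exfalso
      obtain ⟨c, hcmem, _⟩ := hχmem (fun _ => ∅) (fun v => by simp [h0])
      obtain ⟨v⟩ := Fintype.card_pos_iff.mp hnpos
      simpa using hcmem v
    · exact h
  obtain ⟨s, hs⟩ := hdvd
  have hspos : 0 < s := by
    rcases Nat.eq_zero_or_pos s with h0 | h
    · rw [h0, Nat.mul_zero] at hs; omega
    · exact h
  -- lam G t is attained
  have hMne : {m | ∃ L : V → Finset ℕ, (∀ v, (L v).card = t) ∧ lamL G L = m}.Nonempty :=
    ⟨lamL G (fun _ => Finset.range t), fun _ => Finset.range t,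
      fun v => Finset.card_range t, rfl⟩
  have hmem : lam G t ∈ {m | ∃ L : V → Finset ℕ, (∀ v, (L v).card = t) ∧ lamL G L = m} :=
    Nat.sInf_mem hMne
  obtain ⟨L, hLt, hLam⟩ := hmem
  -- build the big list assignment
  set N : ℕ := (Finset.univ.sup fun v : V => (L v).sup id) + 1 with hNdef
  have hNpos : 0 < N := Nat.succ_pos _
  have hltN : ∀ v : V, ∀ x ∈ L v, x < N := by
    intro v x hx
    have h1 : x ≤ (L v).sup id := Finset.le_sup (f := id) hx
    have h2 : (L v).sup id ≤ Finset.univ.sup fun v : V => (L v).sup id :=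
      Finset.le_sup (f := fun v : V => (L v).sup id) (Finset.mem_univ v)
    omega
  set L' : V → Finset ℕ :=
    fun v => (Finset.range s).biUnion fun i => (L v).image (fun x => x + N * i) with hL'def
  have hL'card : ∀ v, (L' v).card = χ := by
    intro v
    rw [hL'def]
    rw [Finset.card_biUnion]
    · have : ∀ i ∈ Finset.range s, ((L v).image (fun x => x + N * i)).card = t := by
        intro i _
        rw [Finset.card_image_of_injective _ (add_left_injective _), hLt v]
      rw [Finset.sum_congr rfl this, Finset.sum_const, Finset.card_range, smul_eq_mul, hs,
        Nat.mul_comm]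
    · intro i hi j hj hij
      rw [Function.onFun, Finset.disjoint_left]
      intro a hai haj
      obtain ⟨x, hx, rfl⟩ := Finset.mem_image.mp hai
      obtain ⟨y, hy, he⟩ := Finset.mem_image.mp haj
      have hxN : x < N := hltN v x hx
      have hyN : y < N := hltN v y hy
      have hdi : (x + N * i) / N = i := by
        rw [Nat.add_mul_div_left _ _ hNpos, Nat.div_eq_of_lt hxN]; exact Nat.zero_add i
      have hdj : (y + N * j) / N = j := by
        rw [Nat.add_mul_div_left _ _ hNpos, Nat.div_eq_of_lt hyN]; exact Nat.zero_add j
      rw [he] at hdj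
      exact hij (hdi.symm.trans hdj)
  -- color it
  obtain ⟨c', hc'mem, hc'adj⟩ := hχmem L' hL'card
  -- decompose the colors
  have hdecomp : ∀ v : V, c' v / N < s ∧ c' v % N ∈ L v := by
    intro v
    have := hc'mem v
    rw [hL'def, Finset.mem_biUnion] at this
    obtain ⟨i, hi, hmemi⟩ := this
    obtain ⟨x, hx, hxe⟩ := Finset.mem_image.mp hmemi
    have hxN : x < N := hltN v x hx
    constructor
    · rw [← hxe, Nat.add_mul_div_left _ _ hNpos, Nat.div_eq_of_lt hxN, Nat.zero_add]
      exact Finset.mem_range.mp hi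
    · rw [← hxe, Nat.add_mul_mod_self_left, Nat.mod_eq_of_lt hxN]
      exact hx
  -- pigeonhole over fibers of v ↦ c' v / N
  have hsum : ∑ i ∈ Finset.range s, (Finset.univ.filter fun v : V => c' v / N = i).card = n := by
    rw [hn]
    rw [← Finset.card_univ]
    exact (Finset.card_eq_sum_card_fiberwise
      (fun v _ => Finset.mem_range.mpr (hdecomp v).1)).symm
  have hpig : ∃ i ∈ Finset.range s,
      n ≤ s * (Finset.univ.filter fun v : V => c' v / N = i).card := by
    by_contra hcon
    push_neg at hcon
    have hne : (Finset.range s).Nonempty := ⟨0, Finset.mem_range.mpr hspos⟩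
    have hlt : ∑ i ∈ Finset.range s, s * (Finset.univ.filter fun v : V => c' v / N = i).card
        < ∑ _i ∈ Finset.range s, n :=
      Finset.sum_lt_sum_of_nonempty hne (fun i hi => hcon i hi)
    rw [← Finset.mul_sum, hsum, Finset.sum_const, Finset.card_range, smul_eq_mul] at hlt
    omega
  obtain ⟨i, hi, hni⟩ := hpig
  set S : Finset V := Finset.univ.filter fun v : V => c' v / N = i with hSdef
  -- S with colors c' · % N is a partial list coloring
  have hpart : IsPartialListColoring G L (S : Set V) (fun v => c' v % N) := by
    constructor
    · intro v _
      exact (hdecomp v).2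
    · intro u hu v hv hadj he
      have he' : c' u % N = c' v % N := he
      simp only [hSdef, Finset.coe_filter, Set.mem_setOf_eq] at hu hv
      have hu' : c' u = N * i + c' u % N := by
        conv_lhs => rw [← Nat.div_add_mod (c' u) N, hu.2]
      have hv' : c' v = N * i + c' v % N := by
        conv_lhs => rw [← Nat.div_add_mod (c' v) N, hv.2]
      exact hc'adj u v hadj (by rw [hu', hv', he'])
  -- so lamL G L ≥ S.card
  have hbdd : BddAbove {k | ∃ (T : Finset V) (c : V → ℕ), T.card = k ∧
      IsPartialListColoring G L (T : Set V) c} := by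
    refine ⟨n, fun k hk => ?_⟩
    obtain ⟨T, c, hTc, _⟩ := hk
    rw [← hTc]
    exact Finset.card_le_univ T
  have hle : S.card ≤ lamL G L :=
    le_csSup hbdd ⟨S, fun v => c' v % N, rfl, hpart⟩
  -- conclude
  calc t * n ≤ t * (s * S.card) := Nat.mul_le_mul_left t hni
    _ = (t * s) * S.card := by ring
    _ = χ * S.card := by rw [hs]
    _ ≤ χ * lamL G L := Nat.mul_le_mul_left χ hle
    _ = χ * lam G t := by rw [hLam]
end

section
/- For any simple graph G and integers 1 ≤ r ≤ s, we have ⌈s/r⌉ · λ_r(G) ≥ λ_s(G). -/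
open SimpleGraph

theorem lam_ceil_inequality {V : Type*} [Fintype V] (G : SimpleGraph V)
    (r s : ℕ) (hr : 1 ≤ r) (hrs : r ≤ s) :
    lam G s ≤ (s ⌈/⌉ r) * lam G r := by
  classical
  set q := s ⌈/⌉ r with hq
  have hrpos : 0 < r := hr
  have hsq : s ≤ r * q := by simpa [smul_eq_mul] using le_smul_ceilDiv (b := s) hrpos
  have hqpos : 0 < q := by
    rcases Nat.eq_zero_or_pos q with h | h
    · rw [h, Nat.mul_zero] at hsq; omega
    · exact h
  -- choose an optimal r-list assignment L*
  have hne : ∃ m, m ∈ {m | ∃ L : V → Finset ℕ, (∀ v, (L v).card = r) ∧ lamL G L = m} :=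
    ⟨_, fun _ => Finset.range r, fun v => Finset.card_range r, rfl⟩
  obtain ⟨Lstar, hLstar, hLval⟩ := Nat.sInf_mem hne
  -- the big list: q disjoint encoded copies of L* v
  set big : V → Finset ℕ :=
    fun v => ((Lstar v) ×ˢ Finset.range q).image fun p => q * p.1 + p.2 with hbig
  have hbigcard : ∀ v, (big v).card = r * q := by
    intro v
    rw [hbig]
    rw [Finset.card_image_of_injOn, Finset.card_product, hLstar, Finset.card_range]
    rintro ⟨x, i⟩ hx ⟨y, j⟩ hy hxy
    simp only [Finset.mem_coe, Finset.mem_product, Finset.mem_range] at hx hy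
    dsimp only at hxy
    have hi : i = j := by
      have := congrArg (· % q) hxy
      simpa [Nat.mul_add_mod, Nat.mod_eq_of_lt hx.2, Nat.mod_eq_of_lt hy.2] using this
    have hx' : x = y := by
      have := congrArg (· / q) hxy
      simpa [Nat.mul_add_div hqpos, Nat.div_eq_of_lt hx.2, Nat.div_eq_of_lt hy.2] using this
    simp [hi, hx']
  -- choose an s-sublist
  have hchoose : ∀ v, ∃ T ⊆ big v, T.card = s := by
    intro v
    exact Finset.exists_subset_card_eq (by rw [hbigcard]; exact hsq)
  choose L hLsub hLcard using hchoose
  -- lam G s ≤ lamL G L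
  have h1 : lam G s ≤ lamL G L := Nat.sInf_le ⟨L, hLcard, rfl⟩
  refine h1.trans ?_
  -- lamL G L ≤ q * lam G r
  have hbdd : BddAbove {k | ∃ (S : Finset V) (c : V → ℕ),
      S.card = k ∧ IsPartialListColoring G L S c} := by
    refine ⟨Fintype.card V, ?_⟩
    rintro k ⟨S, c, rfl, _⟩
    exact S.card_le_univ
  rw [lamL]
  apply csSup_le
  · exact ⟨0, ∅, fun _ => 0, by simp [IsPartialListColoring]⟩
  rintro k ⟨S, c, rfl, hc1, hc2⟩
  -- split S by the residue of c v mod q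
  have hfib : S.card = ∑ i ∈ Finset.range q, (S.filter fun v => c v % q = i).card := by
    apply Finset.card_eq_sum_card_fiberwise
    intro v _
    exact Finset.mem_range.2 (Nat.mod_lt _ hqpos)
  rw [hfib]
  have hkey : ∀ i, (S.filter fun v => c v % q = i).card ≤ lam G r := by
    intro i
    have hLval' : lam G r = lamL G Lstar := hLval.symm
    rw [hLval', lamL]
    have hbdd' : BddAbove {k | ∃ (S : Finset V) (c : V → ℕ),
        S.card = k ∧ IsPartialListColoring G Lstar S c} := by
      refine ⟨Fintype.card V, ?_⟩
      rintro k ⟨S, c, rfl, _⟩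
      exact S.card_le_univ
    apply le_csSup hbdd'
    refine ⟨S.filter fun v => c v % q = i, fun v => c v / q, rfl, ?_, ?_⟩
    · intro v hv
      show c v / q ∈ Lstar v
      simp only [Finset.coe_filter, Set.mem_setOf_eq] at hv
      have hcv : c v ∈ big v := hLsub v (hc1 v hv.1)
      rw [hbig] at hcv
      simp only [Finset.mem_image, Finset.mem_product, Finset.mem_range] at hcv
      obtain ⟨⟨x, j⟩, ⟨hx, hj⟩, hxy⟩ := hcv
      have : c v / q = x := by
        rw [← hxy]
        rw [Nat.mul_add_div hqpos, Nat.div_eq_of_lt hj]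
        simp
      rwa [this]
    · intro u hu v hv hadj hne'
      dsimp only at hne'
      simp only [Finset.coe_filter, Set.mem_setOf_eq] at hu hv
      have h1 := hc2 u hu.1 v hv.1 hadj
      have h2 : c u / q = c v / q := hne'
      have hu2 : c u % q = i := hu.2
      have hv2 : c v % q = i := hv.2
      have : c u = c v :=
        calc c u = q * (c u / q) + c u % q := (Nat.div_add_mod _ _).symm
          _ = q * (c v / q) + c v % q := by rw [h2, hu2, hv2]
          _ = c v := Nat.div_add_mod _ _
      exact h1 this
  calc ∑ i ∈ Finset.range q, (S.filter fun v => c v % q = i).card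
      ≤ ∑ _i ∈ Finset.range q, lam G r := Finset.sum_le_sum fun i _ => hkey i
    _ = q * lam G r := by simp [Finset.sum_const, mul_comm]
end

section
/- Let G be a simple graph, s ≥ 1, and let L_s be the constant s-list assignment giving every vertex the list {1,2,…,s}. Let H be an induced subgraph of G on λ_{L_s}(G) vertices all of which are properly colored in a maximum partial coloring from L_s, chosen so that no uncolored vertex can additionally be colored. If λ_{L_s}(G) < |V(G)|, then χ(H) = s. -/
open SimpleGraph

theorem chromaticNumber_of_max_partial_coloring {V : Type*} [Fintype V]
    (G : SimpleGraph V) (s : ℕ) (hs : 1 ≤ s) (S : Finset V) (c : V → ℕ)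
    (hc : IsPartialListColoring G (fun _ => Finset.Icc 1 s) (S : Set V) c)
    (hcard : S.card = lamL G (fun _ => Finset.Icc 1 s))
    (hlt : S.card < Fintype.card V) :
    (G.induce (S : Set V)).chromaticNumber = (s : ℕ∞) := by
  classical
  obtain ⟨hmem, hadj⟩ := hc
  -- there is an uncolored vertex
  obtain ⟨v₀, hv₀⟩ : ∃ v : V, v ∉ S := by
    by_contra h
    push_neg at h
    have : S = Finset.univ := Finset.eq_univ_iff_forall.mpr h
    rw [this, Finset.card_univ] at hlt
    exact lt_irrefl _ hlt
  have hbdd : BddAbove {k | ∃ (T : Finset V) (c : V → ℕ), T.card = k ∧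
      IsPartialListColoring G (fun _ => Finset.Icc 1 s) (T : Set V) c} := by
    refine ⟨Fintype.card V, ?_⟩
    rintro k ⟨T, c', hT, -⟩
    exact hT ▸ T.card_le_univ
  -- upper bound: colorable with s colors
  have hcol : (G.induce (S : Set V)).Colorable s := by
    refine ⟨fun v => ⟨c v.1 - 1, ?_⟩, ?_⟩
    · have := hmem v.1 v.2
      simp only [Finset.mem_Icc] at this
      omega
    · rintro ⟨u, hu⟩ ⟨w, hw⟩ h hne
      have h1 := hmem u hu
      have h2 := hmem w hw
      simp only [Finset.mem_Icc] at h1 h2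
      have := hadj u hu w hw h
      apply this
      have : c u - 1 = c w - 1 := congrArg (fun x : Fin s => x.1) hne
      omega
  -- lower bound: not colorable with n < s colors
  have hnotcol : ∀ n, n < s → ¬ (G.induce (S : Set V)).Colorable n := by
    intro n hn ⟨f⟩
    -- build a bigger partial coloring
    set c' : V → ℕ := fun v => if h : v ∈ S then (f ⟨v, h⟩ : ℕ) + 1 else s with hc'
    have hmem' : ∀ v ∈ (insert v₀ S : Finset V), c' v ∈ Finset.Icc 1 s := by
      intro v hv
      simp only [hc', Finset.mem_Icc]
      by_cases h : v ∈ S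
      · simp only [dif_pos h]
        have := (f ⟨v, h⟩).2
        omega
      · simp only [dif_neg h]
        omega
    have hadj' : ∀ u ∈ (insert v₀ S : Finset V), ∀ w ∈ (insert v₀ S : Finset V),
        G.Adj u w → c' u ≠ c' w := by
      intro u hu w hw hGadj
      simp only [Finset.mem_insert] at hu hw
      by_cases h1 : u ∈ S <;> by_cases h2 : w ∈ S
      · have := f.valid (show (G.induce (S : Set V)).Adj ⟨u, h1⟩ ⟨w, h2⟩ from hGadj)
        simp only [hc', dif_pos h1, dif_pos h2]
        intro heq
        exact this (Fin.ext (by omega))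
      · have hws : c' w = s := by simp [hc', h2]
        have : c' u < s := by
          simp only [hc', dif_pos h1]
          have := (f ⟨u, h1⟩).2
          omega
        omega
      · have hus : c' u = s := by simp [hc', h1]
        have : c' w < s := by
          simp only [hc', dif_pos h2]
          have := (f ⟨w, h2⟩).2
          omega
        omega
      · exfalso
        rcases hu with rfl | hu
        · rcases hw with rfl | hw
          · exact G.loopless.irrefl _ hGadj
          · exact h2 hw
        · exact h1 hu
    have hle : (insert v₀ S).card ≤ lamL G (fun _ => Finset.Icc 1 s) :=
      le_csSup hbdd ⟨insert v₀ S, c', rfl, by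
        constructor
        · intro v hv; exact hmem' v hv
        · intro u hu w hw; exact hadj' u hu w hw⟩
    rw [Finset.card_insert_of_notMem hv₀, ← hcard] at hle
    omega
  -- conclude
  have h1 : (G.induce (S : Set V)).chromaticNumber ≤ (s : ℕ∞) :=
    hcol.chromaticNumber_le
  have h2 : (s : ℕ∞) ≤ (G.induce (S : Set V)).chromaticNumber := by
    by_contra h
    push_neg at h
    have hne : (G.induce (S : Set V)).chromaticNumber ≠ ⊤ := by
      intro ht; rw [ht] at h; exact (not_top_lt h)
    obtain ⟨n, hn⟩ := WithTop.ne_top_iff_exists.mp hne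
    have hns : n < s := by have := hn ▸ h; exact Nat.cast_lt.mp this
    have : (G.induce (S : Set V)).Colorable n := by
      rw [← SimpleGraph.chromaticNumber_le_iff_colorable, ← hn]; exact le_rfl
    exact hnotcol n hns this
  exact le_antisymm h1 h2
end

section
/- Let G be a simple graph with list chromatic number χ_ℓ, let 1 ≤ r ≤ s ≤ χ_ℓ, and let L_s be the constant s-list assignment with L_s(v) = {1,…,s} for all v. Then λ_r(G) ≥ (1 − (1 − 1/s)^r) · λ_{L_s}(G). -/
open SimpleGraph

lemma lamL_nonempty {V : Type*} (G : SimpleGraph V) (L : V → Finset ℕ) :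
    {k | ∃ (S : Finset V) (c : V → ℕ), S.card = k ∧ IsPartialListColoring G L S c}.Nonempty := by
  refine ⟨0, ∅, fun _ => 0, by simp, ?_, ?_⟩ <;> simp

lemma core {V : Type*} [Fintype V] (G : SimpleGraph V) (r s : ℕ) (hs1 : 1 ≤ s)
    (L : V → Finset ℕ) (hL : ∀ v, (L v).card = r) :
    (1 - (1 - 1 / (s : ℝ)) ^ r) * (lamL G (fun _ => Finset.Icc 1 s) : ℝ) ≤ (lamL G L : ℝ) := by
  classical
  obtain ⟨Sstar, cstar, hcard, hcol⟩ :=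
    Nat.sSup_mem (lamL_nonempty G (fun _ => Finset.Icc 1 s)) (lamL_bdd G (fun _ => Finset.Icc 1 s))
  have hlam : lamL G (fun _ => Finset.Icc 1 s) = Sstar.card := hcard.symm
  by_cases h0 : lamL G (fun _ => Finset.Icc 1 s) = 0
  · rw [h0]
    simp
  -- setup
  set C : Finset ℕ := Finset.univ.biUnion L with hC
  have hLC : ∀ v, L v ⊆ C := fun v => Finset.subset_biUnion_of_mem L (Finset.mem_univ v)
  set n : ℕ := C.card with hn
  obtain ⟨v0, hv0⟩ : Sstar.Nonempty := by
    rw [← Finset.card_pos, ← hlam]; omega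
  have hrn : r ≤ n := by
    rw [← hL v0]; exact Finset.card_le_card (hLC v0)
  set Ψ : (↥C → Fin s) → ℕ → ℕ := fun ψ a => if h : a ∈ C then (ψ ⟨a, h⟩ : ℕ) + 1 else 0 with hΨ
  set Good : (↥C → Fin s) → V → Prop := fun ψ v => ∃ a ∈ L v, Ψ ψ a = cstar v with hGood
  -- the coloring for each ψ
  have hpc : ∀ ψ, IsPartialListColoring G L (Sstar.filter (Good ψ))
      (fun v => if h : Good ψ v then h.choose else 0) := by
    intro ψ
    constructor
    · intro v hv
      rw [Finset.mem_coe, Finset.mem_filter] at hv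
      show (if h : Good ψ v then h.choose else 0) ∈ L v
      rw [dif_pos hv.2]
      exact hv.2.choose_spec.1
    · intro u hu v hv hadj heq
      rw [Finset.mem_coe, Finset.mem_filter] at hu hv
      have heq' : (if h : Good ψ u then h.choose else 0) = (if h : Good ψ v then h.choose else 0) := heq
      rw [dif_pos hu.2, dif_pos hv.2] at heq'
      have heq := heq'
      have h1 := hu.2.choose_spec.2
      have h2 := hv.2.choose_spec.2
      rw [heq, h2] at h1
      exact hcol.2 u hu.1 v hv.1 hadj h1.symm
  have hle : ∀ ψ, (Sstar.filter (Good ψ)).card ≤ lamL G L := fun ψ =>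
    card_le_lamL G L _ _ (hpc ψ)
  -- counting per vertex
  have hcount : ∀ v ∈ Sstar,
      (Finset.univ.filter (fun ψ : ↥C → Fin s => Good ψ v)).card + (s-1)^r * s^(n-r) = s^n := by
    intro v hv
    have hcv : 1 ≤ cstar v ∧ cstar v ≤ s := by
      have := hcol.1 v hv
      simpa [Finset.mem_Icc] using this
    set k : Fin s := ⟨cstar v - 1, by omega⟩ with hk
    set T : Finset ↥C := Finset.univ.filter (fun a : ↥C => (a : ℕ) ∈ L v) with hT
    have hTcard : T.card = r := by
      rw [← hL v]
      refine Finset.card_bij (fun a _ => (a : ℕ)) ?_ ?_ ?_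
      · intro a ha; rw [hT, Finset.mem_filter] at ha; exact ha.2
      · intro a ha b hb hab; exact Subtype.ext hab
      · intro b hb; exact ⟨⟨b, hLC v hb⟩, by simp [hT, hb], rfl⟩
    have hGoodIff : ∀ ψ : ↥C → Fin s, Good ψ v ↔ ∃ a ∈ T, ψ a = k := by
      intro ψ
      constructor
      · rintro ⟨a, ha, hΨa⟩
        have haC := hLC v ha
        refine ⟨⟨a, haC⟩, by simp [hT, ha], ?_⟩
        rw [hΨ] at hΨa
        simp only [dif_pos haC] at hΨa
        ext
        simp only [hk]
        omega
      · rintro ⟨a, haT, hak⟩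
        rw [hT, Finset.mem_filter] at haT
        refine ⟨(a : ℕ), haT.2, ?_⟩
        rw [hΨ]
        simp only [dif_pos a.2]
        rw [show (⟨(a:ℕ), a.2⟩ : ↥C) = a from Subtype.ext rfl, hak]
        simp only [hk]
        omega
    have hbad : (Finset.univ.filter (fun ψ : ↥C → Fin s => ¬ Good ψ v)) =
        Fintype.piFinset (fun a : ↥C => if a ∈ T then Finset.univ.erase k else Finset.univ) := by
      ext ψ
      rw [Fintype.mem_piFinset, Finset.mem_filter]
      simp only [Finset.mem_univ, true_and, hGoodIff ψ, not_exists, not_and]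
      constructor
      · intro h a
        by_cases haT : a ∈ T
        · rw [if_pos haT]
          exact Finset.mem_erase.2 ⟨fun he => h a haT he, Finset.mem_univ _⟩
        · rw [if_neg haT]; exact Finset.mem_univ _
      · intro h a haT hak
        have := h a
        rw [if_pos haT, Finset.mem_erase] at this
        exact this.1 hak
    have hbadcard : (Finset.univ.filter (fun ψ : ↥C → Fin s => ¬ Good ψ v)).card
        = (s-1)^r * s^(n-r) := by
      rw [hbad, Fintype.card_piFinset]
      have : ∀ a : ↥C, ((if a ∈ T then Finset.univ.erase k else Finset.univ).card)
          = if a ∈ T then s - 1 else s := by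
        intro a
        by_cases haT : a ∈ T
        · simp [haT, Finset.card_erase_of_mem (Finset.mem_univ k)]
        · simp [haT]
      rw [Finset.prod_congr rfl (fun a _ => this a), Finset.prod_ite, Finset.prod_const,
        Finset.prod_const]
      congr 1
      · congr 1
        · rw [Finset.filter_mem_eq_inter, Finset.univ_inter, hTcard]
      · congr 1
        have : (Finset.univ.filter (fun a : ↥C => ¬ a ∈ T)).card = Fintype.card ↥C - T.card := by
          rw [← Finset.card_compl]
          congr 1
          ext a
          simp
        rw [this, hTcard, Fintype.card_coe]
    have := Finset.card_filter_add_card_filter_not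
      (s := (Finset.univ : Finset (↥C → Fin s))) (fun ψ => Good ψ v)
    rw [hbadcard, Finset.card_univ, Fintype.card_fun, Fintype.card_fin, Fintype.card_coe] at this
    exact this
  -- sum exchange
  have hsum : ∑ ψ : ↥C → Fin s, (Sstar.filter (Good ψ)).card
      = ∑ v ∈ Sstar, (Finset.univ.filter (fun ψ : ↥C → Fin s => Good ψ v)).card := by
    simp only [Finset.card_filter]
    rw [Finset.sum_comm]
  -- the key nat inequality
  have hkey : lamL G (fun _ => Finset.Icc 1 s) * s^n
      ≤ s^n * lamL G L + lamL G (fun _ => Finset.Icc 1 s) * ((s-1)^r * s^(n-r)) := by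
    have h1 : ∑ v ∈ Sstar, ((Finset.univ.filter (fun ψ : ↥C → Fin s => Good ψ v)).card
        + (s-1)^r * s^(n-r)) = Sstar.card * s^n := by
      rw [Finset.sum_congr rfl hcount, Finset.sum_const, smul_eq_mul]
    rw [Finset.sum_add_distrib, Finset.sum_const, smul_eq_mul, ← hsum] at h1
    have h2 : ∑ ψ : ↥C → Fin s, (Sstar.filter (Good ψ)).card ≤ s^n * lamL G L := by
      calc ∑ ψ : ↥C → Fin s, (Sstar.filter (Good ψ)).card
          ≤ ∑ _ψ : ↥C → Fin s, lamL G L := Finset.sum_le_sum (fun ψ _ => hle ψ)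
        _ = s^n * lamL G L := by
            rw [Finset.sum_const, smul_eq_mul, Finset.card_univ, Fintype.card_fun,
              Fintype.card_fin, Fintype.card_coe]
    calc lamL G (fun _ => Finset.Icc 1 s) * s^n = Sstar.card * s^n := by rw [hlam]
      _ = ∑ ψ : ↥C → Fin s, (Sstar.filter (Good ψ)).card
          + Sstar.card * ((s-1)^r * s^(n-r)) := h1.symm
      _ ≤ s^n * lamL G L + lamL G (fun _ => Finset.Icc 1 s) * ((s-1)^r * s^(n-r)) := by
          rw [hlam]; exact Nat.add_le_add_right h2 _
  -- cast to ℝ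
  have hkeyR : (lamL G (fun _ => Finset.Icc 1 s) : ℝ) * (s:ℝ)^n
      ≤ (s:ℝ)^n * (lamL G L : ℝ)
        + (lamL G (fun _ => Finset.Icc 1 s) : ℝ) * (((s:ℝ)-1)^r * (s:ℝ)^(n-r)) := by
    have h := (Nat.cast_le (α := ℝ)).mpr hkey
    push_cast [Nat.cast_sub hs1] at h
    convert h using 2 <;> push_cast <;> ring
  set x : ℝ := (s : ℝ) with hx
  have hx1 : (1 : ℝ) ≤ x := by rw [hx]; exact_mod_cast hs1
  have hx0 : (0 : ℝ) < x := lt_of_lt_of_le one_pos hx1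
  set a : ℝ := (lamL G (fun _ => Finset.Icc 1 s) : ℝ) with ha
  set m : ℝ := (lamL G L : ℝ) with hm
  have hpow : x^(n-r) * x^r = x^n := by
    rw [← pow_add, Nat.sub_add_cancel hrn]
  have key2 : a * (x^r - (x-1)^r) ≤ x^r * m := by
    apply le_of_mul_le_mul_right _ (pow_pos hx0 (n-r))
    have e1 : a * (x^r - (x-1)^r) * x^(n-r) = a * (x^(n-r) * x^r - (x-1)^r * x^(n-r)) := by ring
    have e2 : x^r * m * x^(n-r) = x^(n-r) * x^r * m := by ring
    rw [e1, e2, hpow]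
    linarith [hkeyR]
  have hxr : (0:ℝ) < x^r := pow_pos hx0 r
  have e3 : (1 - (1 - 1/x)^r) * a = a * (x^r - (x-1)^r) / x^r := by
    rw [show (1 - 1/x) = (x-1)/x by field_simp, div_pow]
    field_simp
  rw [e3, div_le_iff₀ hxr]
  calc a * (x^r - (x-1)^r) ≤ x^r * m := key2
    _ = m * x^r := by ring

theorem lam_ge_bound_of_constant_lists {V : Type*} [Fintype V] (G : SimpleGraph V)
    (r s : ℕ) (hr : 1 ≤ r) (hrs : r ≤ s) (hs : s ≤ listChromaticNumber G) :
    (1 - (1 - 1 / (s : ℝ)) ^ r) * (lamL G (fun _ => Finset.Icc 1 s) : ℝ)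
      ≤ (lam G r : ℝ) := by
  have hs1 : 1 ≤ s := le_trans hr hrs
  have hne : {m | ∃ L : V → Finset ℕ, (∀ v, (L v).card = r) ∧ lamL G L = m}.Nonempty :=
    ⟨lamL G (fun _ => Finset.Icc 1 r), fun _ => Finset.Icc 1 r, fun v => by simp, rfl⟩
  obtain ⟨L, hL, hLlam⟩ := Nat.sInf_mem hne
  rw [show lam G r = sInf {m | ∃ L : V → Finset ℕ, (∀ v, (L v).card = r) ∧ lamL G L = m} from rfl,
    ← hLlam]
  exact core G r s hs1 L hL
end

section
/- Let G be a simple graph with list chromatic number χ_ℓ and 1 ≤ r ≤ s ≤ χ_ℓ. Then λ_r(G) ≥ (1 − (1 − 1/s)^r) · λ_s(G). -/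
open SimpleGraph

section Aux

variable {V : Type*} [Fintype V] (G : SimpleGraph V)

private lemma lamL_bddAbove (L : V → Finset ℕ) :
    BddAbove {k | ∃ (S : Finset V) (c : V → ℕ), S.card = k ∧ IsPartialListColoring G L S c} := by
  refine ⟨Fintype.card V, ?_⟩
  rintro k ⟨S, c, rfl, -⟩
  exact Finset.card_le_univ S

private lemma lamL_set_nonempty (L : V → Finset ℕ) :
    Set.Nonempty {k | ∃ (S : Finset V) (c : V → ℕ),
      S.card = k ∧ IsPartialListColoring G L S c} := by
  refine ⟨0, ∅, fun _ => 0, Finset.card_empty, ?_, ?_⟩ <;> simp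

private lemma le_lamL (L : V → Finset ℕ) (S : Finset V) (c : V → ℕ)
    (h : IsPartialListColoring G L S c) : S.card ≤ lamL G L :=
  le_csSup (lamL_bddAbove G L) ⟨S, c, rfl, h⟩

private lemma lamL_witness (L : V → Finset ℕ) :
    ∃ (S : Finset V) (c : V → ℕ), S.card = lamL G L ∧ IsPartialListColoring G L S c :=
  Nat.sSup_mem (lamL_set_nonempty G L) (lamL_bddAbove G L)

private lemma lam_le_lamL (t : ℕ) (L : V → Finset ℕ) (hL : ∀ v, (L v).card = t) :
    lam G t ≤ lamL G L :=
  Nat.sInf_le ⟨L, hL, rfl⟩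

private lemma lam_witness (t : ℕ) :
    ∃ L : V → Finset ℕ, (∀ v, (L v).card = t) ∧ lamL G L = lam G t := by
  have hne : Set.Nonempty
      {m | ∃ L : V → Finset ℕ, (∀ v, (L v).card = t) ∧ lamL G L = m} :=
    ⟨lamL G (fun _ => Finset.range t),
      ⟨fun _ => Finset.range t, fun _ => Finset.card_range t, rfl⟩⟩
  exact Nat.sInf_mem hne

/-- The key counting lemma: for any `r`-assignment `L`,
`λ_s · (s^r − (s−1)^r) ≤ s^r · λ_L`. -/
private lemma key_count (r s : ℕ) (hs : 1 ≤ s) (L : V → Finset ℕ)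
    (hL : ∀ v, (L v).card = r) :
    lam G s * (s ^ r - (s - 1) ^ r) ≤ s ^ r * lamL G L := by
  classical
  -- witness for the common-palette s-assignment
  obtain ⟨S, c₀, hScard, hc₀mem, hc₀adj⟩ :=
    lamL_witness G (fun _ : V => Finset.range s)
  have hlamS : lam G s ≤ S.card := by
    rw [hScard]; exact lam_le_lamL G s _ (fun _ => Finset.card_range s)
  have main : S.card * (s ^ r - (s - 1) ^ r) ≤ s ^ r * lamL G L := by
    rcases S.eq_empty_or_nonempty with rfl | ⟨v₀, hv₀⟩
    · simp
    -- the color universe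
    set C : Finset ℕ := Finset.univ.biUnion L with hC
    have hsub : ∀ v : V, L v ⊆ C := fun v c hc =>
      Finset.mem_biUnion.2 ⟨v, Finset.mem_univ v, hc⟩
    set m : ℕ := C.card with hm
    have hrm : r ≤ m := by
      rw [← hL v₀]; exact Finset.card_le_card (hsub v₀)
    -- the space of random maps colors → palette
    set F : Finset ({ x // x ∈ C } → ℕ) :=
      Fintype.piFinset (fun _ => Finset.range s) with hF
    have hFcard : F.card = s ^ m := by
      rw [hF, Fintype.card_piFinset]
      simp [Finset.prod_const, hm, Finset.card_range]
    -- extend f to all of ℕ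
    let π : ({ x // x ∈ C } → ℕ) → ℕ → ℕ := fun f c => if h : c ∈ C then f ⟨c, h⟩ else 0
    have hπ : ∀ (f : { x // x ∈ C } → ℕ) (c : ℕ) (h : c ∈ C), π f c = f ⟨c, h⟩ := by
      intro f c h; simp [π, h]
    -- the event at a vertex
    let ev : ({ x // x ∈ C } → ℕ) → V → Prop := fun f v => ∃ c ∈ L v, π f c = c₀ v
    -- Claim A : each realized set is L-colorable
    have claimA : ∀ f : { x // x ∈ C } → ℕ, (S.filter (ev f)).card ≤ lamL G L := by
      intro f
      set col : V → ℕ := fun v => if h : ∃ c ∈ L v, π f c = c₀ v then h.choose else 0 with hcol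
      have hspec : ∀ v, ev f v → col v ∈ L v ∧ π f (col v) = c₀ v := by
        intro v hv
        have h' : ∃ c ∈ L v, π f c = c₀ v := hv
        have := h'.choose_spec
        simp only [hcol, dif_pos h']
        exact this
      refine le_lamL G L (S.filter (ev f)) col ⟨?_, ?_⟩
      · intro v hv
        have hv' := Finset.mem_filter.1 (Finset.mem_coe.1 hv)
        exact (hspec v hv'.2).1
      · intro u hu v hv hadj hne
        have hu' := Finset.mem_filter.1 (Finset.mem_coe.1 hu)
        have hv' := Finset.mem_filter.1 (Finset.mem_coe.1 hv)
        have h1 := (hspec u hu'.2).2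
        have h2 := (hspec v hv'.2).2
        have : c₀ u = c₀ v := by rw [← h1, ← h2, hne]
        exact hc₀adj u (Finset.mem_coe.2 hu'.1) v (Finset.mem_coe.2 hv'.1) hadj this
    -- Claim B : counting bad maps at a vertex
    have claimB : ∀ v ∈ S,
        (F.filter (fun f => ¬ ev f v)).card = (s - 1) ^ r * s ^ (m - r) := by
      intro v hv
      have hc₀v : c₀ v ∈ Finset.range s := hc₀mem v (Finset.mem_coe.2 hv)
      have hset : F.filter (fun f => ¬ ev f v) =
          Fintype.piFinset (fun x : { x // x ∈ C } =>
            if (x : ℕ) ∈ L v then (Finset.range s).erase (c₀ v) else Finset.range s) := by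
        ext f
        simp only [Finset.mem_filter, hF, Fintype.mem_piFinset]
        constructor
        · rintro ⟨hf, hnev⟩ x
          by_cases hx : (x : ℕ) ∈ L v
          · rw [if_pos hx]
            refine Finset.mem_erase.2 ⟨?_, hf x⟩
            intro hfx
            refine hnev ⟨(x : ℕ), hx, ?_⟩
            rw [hπ f _ x.2]
            simpa using hfx
          · rw [if_neg hx]; exact hf x
        · intro hf
          constructor
          · intro x
            by_cases hx : (x : ℕ) ∈ L v
            · have := hf x; rw [if_pos hx] at this
              exact Finset.mem_of_mem_erase this
            · have := hf x; rwa [if_neg hx] at this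
          · rintro ⟨c, hc, hcol⟩
            have hcC : c ∈ C := hsub v hc
            have h2 := hf ⟨c, hcC⟩
            rw [if_pos hc] at h2
            have := (Finset.mem_erase.1 h2).1
            rw [hπ f c hcC] at hcol
            exact this hcol
      rw [hset, Fintype.card_piFinset]
      have hcards : ∀ x : { x // x ∈ C },
          ((if (x : ℕ) ∈ L v then (Finset.range s).erase (c₀ v) else Finset.range s)).card
            = if (x : ℕ) ∈ L v then s - 1 else s := by
        intro x
        by_cases hx : (x : ℕ) ∈ L v
        · rw [if_pos hx, if_pos hx, Finset.card_erase_of_mem hc₀v, Finset.card_range]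
        · rw [if_neg hx, if_neg hx, Finset.card_range]
      rw [Finset.prod_congr rfl (fun x _ => hcards x)]
      have hprod : (∏ x : { x // x ∈ C }, if (x : ℕ) ∈ L v then s - 1 else s)
          = ∏ c ∈ C, (if c ∈ L v then s - 1 else s) :=
        Finset.prod_coe_sort C (fun c => if c ∈ L v then s - 1 else s)
      rw [hprod, Finset.prod_ite]
      have hfilter : C.filter (fun c => c ∈ L v) = L v := by
        ext c
        simp only [Finset.mem_filter]
        exact ⟨fun h => h.2, fun h => ⟨hsub v h, h⟩⟩
      have hfiltercard : (C.filter (fun c => ¬ c ∈ L v)).card = m - r := by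
        have := Finset.card_filter_add_card_filter_not
          (s := C) (p := fun c => c ∈ L v)
        rw [hfilter, hL v] at this
        omega
      rw [Finset.prod_const, Finset.prod_const, hfilter, hfiltercard, hL v]
    -- Claim B' : counting good maps at a vertex
    have claimB' : ∀ v ∈ S,
        (F.filter (fun f => ev f v)).card = s ^ m - (s - 1) ^ r * s ^ (m - r) := by
      intro v hv
      have := Finset.card_filter_add_card_filter_not
        (s := F) (p := fun f => ev f v)
      rw [claimB v hv, hFcard] at this
      omega
    -- double counting
    have hsum : ∑ f ∈ F, (S.filter (ev f)).card
        = S.card * (s ^ m - (s - 1) ^ r * s ^ (m - r)) := by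
      have h1 : ∀ f : { x // x ∈ C } → ℕ,
          (S.filter (ev f)).card = ∑ v ∈ S, if ev f v then 1 else 0 := by
        intro f; exact Finset.card_filter _ _
      calc ∑ f ∈ F, (S.filter (ev f)).card
          = ∑ f ∈ F, ∑ v ∈ S, (if ev f v then 1 else 0) := by
            exact Finset.sum_congr rfl (fun f _ => h1 f)
        _ = ∑ v ∈ S, ∑ f ∈ F, (if ev f v then 1 else 0) := Finset.sum_comm
        _ = ∑ v ∈ S, (F.filter (fun f => ev f v)).card := by
            exact Finset.sum_congr rfl (fun v _ => (Finset.card_filter _ _).symm)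
        _ = ∑ v ∈ S, (s ^ m - (s - 1) ^ r * s ^ (m - r)) :=
            Finset.sum_congr rfl (fun v hv => claimB' v hv)
        _ = S.card * (s ^ m - (s - 1) ^ r * s ^ (m - r)) := by
            rw [Finset.sum_const, smul_eq_mul]
    have hbound : ∑ f ∈ F, (S.filter (ev f)).card ≤ s ^ m * lamL G L := by
      calc ∑ f ∈ F, (S.filter (ev f)).card
          ≤ F.card • lamL G L :=
            Finset.sum_le_card_nsmul F _ (lamL G L) (fun f _ => claimA f)
        _ = s ^ m * lamL G L := by rw [smul_eq_mul, hFcard]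
    have hmain : S.card * (s ^ m - (s - 1) ^ r * s ^ (m - r)) ≤ s ^ m * lamL G L := by
      rw [← hsum]; exact hbound
    -- cancel the factor s^(m-r)
    have hpow : s ^ m = s ^ r * s ^ (m - r) := by
      rw [← pow_add]; congr 1; omega
    have hkpos : 0 < s ^ (m - r) := Nat.pow_pos hs
    refine Nat.le_of_mul_le_mul_right ?_ hkpos
    calc S.card * (s ^ r - (s - 1) ^ r) * s ^ (m - r)
        = S.card * ((s ^ r - (s - 1) ^ r) * s ^ (m - r)) := by ring
      _ = S.card * (s ^ m - (s - 1) ^ r * s ^ (m - r)) := by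
          rw [Nat.sub_mul, ← pow_add, Nat.add_sub_cancel' hrm]
      _ ≤ s ^ m * lamL G L := hmain
      _ = s ^ r * lamL G L * s ^ (m - r) := by rw [hpow]; ring
  calc lam G s * (s ^ r - (s - 1) ^ r)
      ≤ S.card * (s ^ r - (s - 1) ^ r) := Nat.mul_le_mul_right _ hlamS
    _ ≤ s ^ r * lamL G L := main

end Aux

theorem lam_ge_bound_of_lam {V : Type*} [Fintype V] (G : SimpleGraph V)
    (r s : ℕ) (hr : 1 ≤ r) (hrs : r ≤ s) (hs : s ≤ listChromaticNumber G) :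
    (1 - (1 - 1 / (s : ℝ)) ^ r) * (lam G s : ℝ) ≤ (lam G r : ℝ) := by
  have hs1 : 1 ≤ s := hr.trans hrs
  obtain ⟨L₀, hL₀, hlam⟩ := lam_witness G r
  have hkey : lam G s * (s ^ r - (s - 1) ^ r) ≤ s ^ r * lam G r := by
    rw [← hlam]
    exact key_count G r s hs1 L₀ hL₀
  have hble : (s - 1) ^ r ≤ s ^ r := Nat.pow_le_pow_left (Nat.sub_le s 1) r
  have hcast : (lam G s : ℝ) * ((s : ℝ) ^ r - ((s : ℝ) - 1) ^ r)
      ≤ (s : ℝ) ^ r * (lam G r : ℝ) := by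
    have h := (Nat.cast_le (α := ℝ)).2 hkey
    push_cast [Nat.cast_sub hble, Nat.cast_sub hs1] at h
    convert h using 2
  have hspos : (0 : ℝ) < (s : ℝ) := by
    have : (0 : ℕ) < s := hs1
    exact_mod_cast this
  have hsrpos : (0 : ℝ) < (s : ℝ) ^ r := pow_pos hspos r
  have h1 : (1 : ℝ) - 1 / (s : ℝ) = ((s : ℝ) - 1) / (s : ℝ) := by
    field_simp
  rw [h1, div_pow]
  have h2 : (1 - ((s : ℝ) - 1) ^ r / (s : ℝ) ^ r) * (lam G s : ℝ)
      = ((s : ℝ) ^ r - ((s : ℝ) - 1) ^ r) / (s : ℝ) ^ r * (lam G s : ℝ) := by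
    field_simp
  rw [h2, div_mul_eq_mul_div, div_le_iff₀ hsrpos]
  calc ((s : ℝ) ^ r - ((s : ℝ) - 1) ^ r) * (lam G s : ℝ)
      = (lam G s : ℝ) * ((s : ℝ) ^ r - ((s : ℝ) - 1) ^ r) := by ring
    _ ≤ (s : ℝ) ^ r * (lam G r : ℝ) := hcast
    _ = (lam G r : ℝ) * (s : ℝ) ^ r := by ring
end

section
/- Let G be a simple graph, 1 ≤ t ≤ χ_ℓ(G), and L_t a t-list assignment with λ_{L_t}(G) = λ_t(G). If H is the induced subgraph on the colored vertices of a maximum partial proper coloring of G from L_t (so |V(H)| = λ_t(G)) and λ_t(G) < |V(G)|, then χ_ℓ(H) ≥ t. -/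
open SimpleGraph

/-- Greedy: if every list has at least `S.card` colors, `S` can be properly colored. -/
lemma greedy_colorable {V : Type*} [DecidableEq V] (G : SimpleGraph V) (S : Finset V)
    (L : V → Finset ℕ) (hL : ∀ v ∈ S, S.card ≤ (L v).card) :
    ∃ c : V → ℕ, (∀ v ∈ S, c v ∈ L v) ∧ ∀ u ∈ S, ∀ v ∈ S, G.Adj u v → c u ≠ c v := by
  induction S using Finset.induction with
  | empty => exact ⟨fun _ => 0, by simp, by simp⟩
  | @insert a S ha ih =>
    obtain ⟨c, hc1, hc2⟩ := ih (fun v hv => le_trans (by simp [Finset.card_insert_of_notMem ha])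
      (hL v (Finset.mem_insert_of_mem hv)))
    have hcard : (S.image c).card < (L a).card := by
      calc (S.image c).card ≤ S.card := Finset.card_image_le
        _ < S.card + 1 := Nat.lt_succ_self _
        _ = (insert a S).card := (Finset.card_insert_of_notMem ha).symm
        _ ≤ (L a).card := hL a (Finset.mem_insert_self a S)
    have hne : (L a \ S.image c).Nonempty := Finset.card_pos.1 (by
      have := Finset.le_card_sdiff (S.image c) (L a); omega)
    obtain ⟨x, hx⟩ := hne
    obtain ⟨hxL, hxim⟩ := Finset.mem_sdiff.1 hx
    have hupd : ∀ z ∈ S, Function.update c a x z = c z := fun z hz =>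
      Function.update_of_ne (by rintro rfl; exact ha hz) _ _
    refine ⟨Function.update c a x, ?_, ?_⟩
    · intro v hv
      rcases Finset.mem_insert.1 hv with hv | hv
      · rw [hv, Function.update_self]; exact hxL
      · rw [hupd v hv]; exact hc1 v hv
    · intro u hu v hv hadj
      rcases Finset.mem_insert.1 hu with hu | hu <;> rcases Finset.mem_insert.1 hv with hv | hv
      · rw [hu, hv] at hadj; exact absurd hadj (G.irrefl)
      · rw [hu, Function.update_self, hupd v hv]
        exact fun h => hxim (by rw [h]; exact Finset.mem_image_of_mem c hv)
      · rw [hv, hupd u hu, Function.update_self]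
        exact fun h => hxim (by rw [← h]; exact Finset.mem_image_of_mem c hu)
      · rw [hupd u hu, hupd v hv]
        exact hc2 u hu v hv hadj

theorem listChromaticNumber_colored_subgraph_ge {V : Type*} [Fintype V]
    (G : SimpleGraph V) (t : ℕ) (ht : 1 ≤ t) (htχ : t ≤ listChromaticNumber G)
    (L : V → Finset ℕ) (hLt : ∀ v, (L v).card = t) (hL : lamL G L = lam G t)
    (S : Finset V) (c : V → ℕ)
    (hc : IsPartialListColoring G L (S : Set V) c)
    (hcard : S.card = lam G t) (hlt : lam G t < Fintype.card V) :
    t ≤ listChromaticNumber (G.induce (S : Set V)) := by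
  classical
  by_contra hlt'
  push_neg at hlt'
  set H := G.induce (S : Set V) with hH
  -- the set defining χℓ(H) is nonempty, so its infimum is a member
  have hNE : {k | ∀ L' : ↥(S : Set V) → Finset ℕ, (∀ v, (L' v).card = k) →
      ListColorable H L'}.Nonempty := by
    refine ⟨Fintype.card ↥(S : Set V), fun L' hL' => ?_⟩
    obtain ⟨c', h1, h2⟩ := greedy_colorable H Finset.univ L'
      (fun v _ => by rw [hL' v, Finset.card_univ])
    exact ⟨c', fun v => h1 v (Finset.mem_univ v),
      fun u v h => h2 u (Finset.mem_univ u) v (Finset.mem_univ v) h⟩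
  have hmem : listChromaticNumber H ∈ {k | ∀ L' : ↥(S : Set V) → Finset ℕ,
      (∀ v, (L' v).card = k) → ListColorable H L'} := Nat.sInf_mem hNE
  set k := listChromaticNumber H with hk
  -- pick an uncolored vertex w and a color x ∈ L w
  obtain ⟨w, hw⟩ : ∃ w, w ∉ S := by
    by_contra h
    push_neg at h
    rw [Finset.eq_univ_iff_forall.2 h, Finset.card_univ] at hcard
    omega
  obtain ⟨x, hx⟩ : (L w).Nonempty := Finset.card_pos.1 (by rw [hLt w]; omega)
  -- shrink the erased lists to size k
  have hks : ∀ v : ↥(S : Set V), k ≤ ((L ↑v).erase x).card := fun v => by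
    have h1 := Finset.pred_card_le_card_erase (s := L ↑v) (a := x)
    rw [hLt ↑v] at h1
    omega
  choose T hT1 hT2 using fun v : ↥(S : Set V) =>
    Finset.exists_subset_card_eq (s := (L ↑v).erase x) (n := k) (hks v)
  obtain ⟨c', hc'1, hc'2⟩ := hmem T hT2
  have hc'e : ∀ v : ↥(S : Set V), c' v ∈ (L ↑v).erase x := fun v => hT1 v (hc'1 v)
  -- extend to a partial coloring of insert w S
  set d : V → ℕ := fun v => if h : v ∈ (S : Set V) then c' ⟨v, h⟩ else x with hd
  have hdS : ∀ v (h : v ∈ (S : Set V)), d v = c' ⟨v, h⟩ := fun v h => dif_pos h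
  have hdw : d w = x := dif_neg (by simpa using hw)
  have hpart : IsPartialListColoring G L ((insert w S : Finset V) : Set V) d := by
    constructor
    · intro v hv
      rcases Finset.mem_insert.1 (by simpa using hv) with hv | hv
      · rw [hv, hdw]; exact hx
      · rw [hdS v (by simpa using hv)]
        exact Finset.mem_of_mem_erase (hc'e ⟨v, by simpa using hv⟩)
    · intro u hu v hv hadj
      rcases Finset.mem_insert.1 (by simpa using hu) with hu | hu <;>
        rcases Finset.mem_insert.1 (by simpa using hv) with hv | hv
      · rw [hu, hv] at hadj; exact absurd hadj (G.irrefl)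
      · rw [hu, hdw, hdS v (by simpa using hv)]
        exact fun h => (Finset.ne_of_mem_erase (hc'e ⟨v, by simpa using hv⟩)) h.symm
      · rw [hv, hdw, hdS u (by simpa using hu)]
        exact Finset.ne_of_mem_erase (hc'e ⟨u, by simpa using hu⟩)
      · rw [hdS u (by simpa using hu), hdS v (by simpa using hv)]
        exact hc'2 ⟨u, by simpa using hu⟩ ⟨v, by simpa using hv⟩ hadj
  -- contradiction with maximality
  have hbdd : BddAbove {m | ∃ (S' : Finset V) (c : V → ℕ),
      S'.card = m ∧ IsPartialListColoring G L (S' : Set V) c} := by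
    refine ⟨Fintype.card V, ?_⟩
    rintro m ⟨T', c'', hcard', -⟩
    exact hcard' ▸ Finset.card_le_univ T'
  have hle : S.card + 1 ≤ lamL G L := by
    refine le_csSup hbdd ⟨insert w S, d, ?_, hpart⟩
    rw [Finset.card_insert_of_notMem hw]
  rw [hL, hcard] at hle
  omega
end
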